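/- Bound on the partial derivative of the log-determinant Jeffreys penalty: with P = X(XᵀWX)^{-1}XᵀW and W̃_s diagonal with entries x_{ts}(1 − 2μ_t), μ_t ∈ (0,1), we have |tr(P W̃_s)| ≤ p · max_t |x_{ts}|. -/

import Mathlib

open Matrix

theorem jeffreys_partial_trace_bound (n p : ℕ) [NeZero n]
    (X : Matrix (Fin n) (Fin p) ℝ) (hX : X.rank = p)
    (μ : Fin n → ℝ) (hμ : ∀ t, μ t ∈ Set.Ioo (0 : ℝ) 1) (s : Fin p) :
    letI W := Matrix.diagonal (fun t => μ t * (1 - μ t))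
    letI Wt := Matrix.diagonal (fun t => X t s * (1 - 2 * μ t))
    |(X * (Xᵀ * W * X)⁻¹ * Xᵀ * W * Wt).trace| ≤
      (p : ℝ) * (Finset.univ.sup' Finset.univ_nonempty fun t : Fin n => |X t s|) := by
  set w : Fin n → ℝ := fun t => μ t * (1 - μ t) with hwdef
  set W : Matrix (Fin n) (Fin n) ℝ := Matrix.diagonal w with hWdef
  set d : Fin n → ℝ := fun t => X t s * (1 - 2 * μ t) with hddef
  set Wt : Matrix (Fin n) (Fin n) ℝ := Matrix.diagonal d with hWtdef
  set M : Matrix (Fin p) (Fin p) ℝ := Xᵀ * W * X with hMdef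
  have hw : ∀ t, 0 < w t := fun t =>
    mul_pos (hμ t).1 (by have := (hμ t).2; linarith)
  -- injectivity of mulVec
  have hinj : ∀ x : Fin p → ℝ, X.mulVec x = 0 → x = 0 := by
    have h1 := X.mulVecLin.finrank_range_add_finrank_ker
    rw [show Module.finrank ℝ (LinearMap.range X.mulVecLin) = p from hX] at h1
    simp [Module.finrank_pi] at h1
    intro x hx
    have : x ∈ LinearMap.ker X.mulVecLin := by simpa using hx
    simpa [h1] using this
  have hWT : Wᵀ = W := by rw [hWdef]; exact Matrix.diagonal_transpose w
  have hMsymm : Mᵀ = M := by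
    simp [hMdef, Matrix.transpose_mul, Matrix.transpose_transpose, hWT, Matrix.mul_assoc]
  have hWpd : W.PosDef := Matrix.PosDef.diagonal hw
  have hMpd : M.PosDef := by
    refine Matrix.PosDef.of_dotProduct_mulVec_pos ?_ ?_
    · rw [Matrix.IsHermitian, conjTranspose_eq_transpose_of_trivial, hMsymm]
    · intro x hx
      have hy : X.mulVec x ≠ 0 := fun h => hx (hinj x h)
      have hpos := hWpd.dotProduct_mulVec_pos hy
      have heq : star x ⬝ᵥ (M *ᵥ x) = star (X *ᵥ x) ⬝ᵥ (W *ᵥ (X *ᵥ x)) := by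
        rw [hMdef, ← Matrix.mulVec_mulVec, ← Matrix.mulVec_mulVec, star_trivial,
          star_trivial, Matrix.dotProduct_mulVec, Matrix.vecMul_transpose]
      rw [heq]; exact hpos
  have hdet : IsUnit M.det := isUnit_iff_ne_zero.mpr hMpd.det_pos.ne'
  set S : Matrix (Fin n) (Fin n) ℝ := X * M⁻¹ * Xᵀ with hSdef
  have hSsymm : ∀ i j, S j i = S i j := by
    intro i j
    have : Sᵀ = S := by
      simp only [hSdef, Matrix.transpose_mul, Matrix.transpose_transpose,
        Matrix.transpose_nonsing_inv, hMsymm, Matrix.mul_assoc]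
    exact congrFun (congrFun this i) j
  set P : Matrix (Fin n) (Fin n) ℝ := S * W with hPdef
  have hPP : P * P = P := by
    have h1 : P * P = X * M⁻¹ * M * (M⁻¹ * (Xᵀ * W)) := by
      simp only [hPdef, hSdef, hMdef, Matrix.mul_assoc]
    rw [Matrix.nonsing_inv_mul_cancel_right _ _ hdet] at h1
    rw [h1]; simp only [hPdef, hSdef, Matrix.mul_assoc]
  have htr : P.trace = (p : ℝ) := by
    have h2 : P.trace = (M * M⁻¹).trace := by
      rw [show P = (X * M⁻¹) * (Xᵀ * W) by simp only [hPdef, hSdef, Matrix.mul_assoc],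
        Matrix.trace_mul_comm]
      simp only [hMdef, Matrix.mul_assoc]
    rw [h2, Matrix.mul_nonsing_inv _ hdet, Matrix.trace_one]
    simp
  have hPentry : ∀ i j, P i j = S i j * w j := fun i j => by
    simp [hPdef, hWdef, Matrix.mul_diagonal]
  have hPsq : ∀ t, P t t = ∑ j, w t * w j * (S t j)^2 := by
    intro t
    conv_lhs => rw [← hPP]
    rw [Matrix.mul_apply]
    refine Finset.sum_congr rfl fun j _ => ?_
    rw [hPentry t j, hPentry j t, hSsymm t j]; ring
  have hP0 : ∀ t, 0 ≤ P t t := by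
    intro t; rw [hPsq t]
    exact Finset.sum_nonneg fun j _ =>
      mul_nonneg (mul_nonneg (hw t).le (hw j).le) (sq_nonneg _)
  have hP1 : ∀ t, P t t ≤ 1 := by
    intro t
    have hsq : (P t t)^2 ≤ P t t := by
      conv_rhs => rw [hPsq t]
      calc (P t t)^2 = w t * w t * (S t t)^2 := by rw [hPentry t t]; ring
        _ ≤ ∑ j, w t * w j * (S t j)^2 :=
          Finset.single_le_sum (f := fun j => w t * w j * (S t j)^2)
            (fun j _ => mul_nonneg (mul_nonneg (hw t).le (hw j).le) (sq_nonneg _))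
            (Finset.mem_univ t)
    nlinarith [hP0 t]
  set K : ℝ := Finset.univ.sup' Finset.univ_nonempty fun t : Fin n => |X t s| with hKdef
  have hdK : ∀ t, |d t| ≤ K := by
    intro t
    have h1 : |d t| ≤ |X t s| := by
      have habs : |d t| = |X t s| * |1 - 2 * μ t| := abs_mul _ _
      have h2 : |1 - 2 * μ t| ≤ 1 := by
        have := (hμ t).1; have := (hμ t).2
        rw [abs_le]; constructor <;> linarith
      nlinarith [abs_nonneg (X t s), abs_nonneg (1 - 2 * μ t)]
    have h3 : |X t s| ≤ K := by
      rw [hKdef]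
      exact Finset.le_sup' (fun t : Fin n => |X t s|) (Finset.mem_univ t)
    exact h1.trans h3
  have hgoal : (X * M⁻¹ * Xᵀ * W * Wt) = P * Wt := by
    simp only [hPdef, hSdef, Matrix.mul_assoc]
  rw [hgoal]
  have htrace : (P * Wt).trace = ∑ t, P t t * d t := by
    simp [Matrix.trace, Matrix.diag, Matrix.mul_diagonal, hWtdef]
  rw [htrace]
  calc |∑ t, P t t * d t| ≤ ∑ t, |P t t * d t| := Finset.abs_sum_le_sum_abs _ _
    _ ≤ ∑ t, P t t * K := by
        refine Finset.sum_le_sum fun t _ => ?_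
        rw [abs_mul, abs_of_nonneg (hP0 t)]
        exact mul_le_mul_of_nonneg_left (hdK t) (hP0 t)
    _ = P.trace * K := by simp [Matrix.trace, Matrix.diag, Finset.sum_mul]
    _ = (p : ℝ) * K := by rw [htr]
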